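/- Let λ ≥ 0 be real, x₀ ∈ (0,1), K > 0, and j a natural number. Let v : (0,x₀] → ℝ be twice continuously differentiable and bounded, and suppose (1/2)x²v''(x) + x v'(x) − (1+λ)v(x) = F(x) on (0,x₀], where F is continuous and |F(x)| ≤ K x^{m̄(λ)} (1 − log x)^j for all x ∈ (0,x₀]. Then there is a constant C′ such that |v(x)| ≤ C′ x^{m̄(λ)} (1 − log x)^{j+1} for all x ∈ (0,x₀]. -/

import Mathlib

set_option maxHeartbeats 1000000

open Real Set Filter Topology

/-- The indicial root `m̄(λ) = (-1 + √(9+8λ))/2`. -/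
noncomputable def mUp (lam : ℝ) : ℝ := (-1 + Real.sqrt (9 + 8 * lam)) / 2

/-- The indicial root `m̲(λ) = (-1 - √(9+8λ))/2`. -/
noncomputable def mDown (lam : ℝ) : ℝ := (-1 - Real.sqrt (9 + 8 * lam)) / 2


/- ### Auxiliary machinery -/

lemma phk_hasDerivAt (p : ℝ) (k : ℕ) {x : ℝ} (hx : 0 < x) :
    HasDerivAt (fun y : ℝ => y ^ p * (1 - Real.log y) ^ k)
      (x ^ (p - 1) * (p * (1 - Real.log x) ^ k - k * (1 - Real.log x) ^ (k - 1))) x := by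
  have h1 : HasDerivAt (fun y : ℝ => y ^ p) (p * x ^ (p - 1)) x :=
    Real.hasDerivAt_rpow_const (Or.inl hx.ne')
  have hlog : HasDerivAt (fun y : ℝ => 1 - Real.log y) (-x⁻¹) x := by
    simpa using (Real.hasDerivAt_log hx.ne').const_sub 1
  have h2 : HasDerivAt (fun y : ℝ => (1 - Real.log y) ^ k)
      ((k : ℝ) * (1 - Real.log x) ^ (k - 1) * -x⁻¹) x := by
    have := (hasDerivAt_pow k (1 - Real.log x)).comp x hlog
    simpa [Function.comp_def, mul_comm, mul_assoc, mul_left_comm] using this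
  have h3 := h1.fun_mul h2
  refine h3.congr_deriv ?_
  have hxp : x ^ (p - 1) = x ^ p / x := by
    rw [Real.rpow_sub hx, Real.rpow_one]
  rw [hxp]
  field_simp
  ring

noncomputable def bphi (m : ℝ) (j : ℕ) : ℝ → ℝ :=
  fun x => x ^ m * (1 - Real.log x) ^ (j + 1)
noncomputable def bphi1 (m : ℝ) (j : ℕ) : ℝ → ℝ :=
  fun x => m * (x ^ (m - 1) * (1 - Real.log x) ^ (j + 1))
    - ((j : ℝ) + 1) * (x ^ (m - 1) * (1 - Real.log x) ^ j)
noncomputable def bphi2 (m : ℝ) (j : ℕ) : ℝ → ℝ :=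
  fun x => m * (x ^ (m - 1 - 1) * ((m - 1) * (1 - Real.log x) ^ (j + 1)
        - ((j : ℝ) + 1) * (1 - Real.log x) ^ j))
    - ((j : ℝ) + 1) * (x ^ (m - 1 - 1) * ((m - 1) * (1 - Real.log x) ^ j
        - (j : ℝ) * (1 - Real.log x) ^ (j - 1)))
noncomputable def bpsi (q : ℝ) : ℝ → ℝ := fun x => x ^ q
noncomputable def bpsi1 (q : ℝ) : ℝ → ℝ := fun x => q * x ^ (q - 1)
noncomputable def bpsi2 (q : ℝ) : ℝ → ℝ := fun x => q * ((q - 1) * x ^ (q - 1 - 1))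

lemma bphi_hasDeriv (m : ℝ) (j : ℕ) {x : ℝ} (hx : 0 < x) :
    HasDerivAt (bphi m j) (bphi1 m j x) x := by
  have := phk_hasDerivAt m (j + 1) hx
  convert this using 1
  · rfl
  simp only [bphi1, Nat.add_sub_cancel]
  push_cast
  ring

lemma bphi1_hasDeriv (m : ℝ) (j : ℕ) {x : ℝ} (hx : 0 < x) :
    HasDerivAt (bphi1 m j) (bphi2 m j x) x := by
  have h1 := (phk_hasDerivAt (m - 1) (j + 1) hx).const_mul m
  have h2 := (phk_hasDerivAt (m - 1) j hx).const_mul ((j : ℝ) + 1)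
  have := h1.sub h2
  refine this.congr_deriv ?_
  simp only [bphi2, Nat.add_sub_cancel]
  push_cast
  ring

lemma bphi_contAt (m : ℝ) (j : ℕ) {x : ℝ} (hx : 0 < x) :
    ContinuousAt (bphi m j) x :=
  (Real.continuousAt_rpow_const x m (Or.inl hx.ne')).mul
    ((continuousAt_const.sub (Real.continuousAt_log hx.ne')).pow _)

lemma bphi2_contAt (m : ℝ) (j : ℕ) {x : ℝ} (hx : 0 < x) :
    ContinuousAt (bphi2 m j) x := by
  have hrp : ContinuousAt (fun y : ℝ => y ^ (m - 1 - 1)) x :=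
    Real.continuousAt_rpow_const x _ (Or.inl hx.ne')
  have ht : ContinuousAt (fun y : ℝ => 1 - Real.log y) x :=
    continuousAt_const.sub (Real.continuousAt_log hx.ne')
  exact ((continuousAt_const.mul (hrp.mul ((continuousAt_const.mul (ht.pow (j+1))).sub
      (continuousAt_const.mul (ht.pow j))))).sub
    (continuousAt_const.mul (hrp.mul ((continuousAt_const.mul (ht.pow j)).sub
      (continuousAt_const.mul (ht.pow (j-1)))))))

lemma bpsi_hasDeriv (q : ℝ) {x : ℝ} (hx : 0 < x) :
    HasDerivAt (bpsi q) (bpsi1 q x) x :=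
  Real.hasDerivAt_rpow_const (Or.inl hx.ne')

lemma bpsi1_hasDeriv (q : ℝ) {x : ℝ} (hx : 0 < x) :
    HasDerivAt (bpsi1 q) (bpsi2 q x) x :=
  (Real.hasDerivAt_rpow_const (Or.inl hx.ne')).const_mul q

lemma bpsi_contAt (q : ℝ) {x : ℝ} (hx : 0 < x) : ContinuousAt (bpsi q) x :=
  Real.continuousAt_rpow_const x q (Or.inl hx.ne')

lemma bpsi2_contAt (q : ℝ) {x : ℝ} (hx : 0 < x) : ContinuousAt (bpsi2 q) x :=
  continuousAt_const.mul (continuousAt_const.mul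
    (Real.continuousAt_rpow_const x _ (Or.inl hx.ne')))

lemma rpow_peel {x : ℝ} (hx : x ≠ 0) (p : ℝ) :
    x ^ p = x ^ (p - 1) * x := by
  rw [show p = (p - 1) + 1 by ring, Real.rpow_add_one hx]
  ring_nf

lemma Lbpsi (lam q : ℝ) (hq : q ^ 2 + q = 2 + 2 * lam) {x : ℝ} (hx : 0 < x) :
    (1/2) * x ^ 2 * bpsi2 q x + x * bpsi1 q x - (1 + lam) * bpsi q x = 0 := by
  simp only [bpsi, bpsi1, bpsi2]
  rw [rpow_peel hx.ne' q, rpow_peel hx.ne' (q - 1)]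
  linear_combination (x ^ (q - 1 - 1) * x ^ 2 / 2) * hq

lemma Lbphi_le (lam m μ : ℝ) (hind : m ^ 2 + m = 2 + 2 * lam) (hμ : μ = m + 1/2)
    (hμpos : 0 < μ) (j : ℕ) {x : ℝ} (hx : 0 < x)
    (ht1 : 1 ≤ 1 - Real.log x) (htj : (j : ℝ) ≤ μ * (1 - Real.log x)) :
    (1/2) * x ^ 2 * bphi2 m j x + x * bphi1 m j x - (1 + lam) * bphi m j x
      ≤ -(μ/2) * (x ^ m * (1 - Real.log x) ^ j) := by
  set t := 1 - Real.log x with htdef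
  have htpos : 0 < t := lt_of_lt_of_le one_pos ht1
  have hu : (j : ℝ) * t ^ (j - 1) ≤ μ * t ^ j := by
    cases j with
    | zero => simpa using le_of_lt (by positivity : (0:ℝ) < μ * t ^ 0)
    | succ n =>
      have h1' : ((n : ℝ) + 1) ≤ μ * t := by push_cast at htj ⊢; linarith
      calc ((n + 1 : ℕ) : ℝ) * t ^ (n + 1 - 1) = ((n : ℝ) + 1) * t ^ n := by push_cast; ring
        _ ≤ (μ * t) * t ^ n := mul_le_mul_of_nonneg_right h1' (by positivity)
        _ = μ * t ^ (n + 1) := by ring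
  have hEeq : (1/2) * x ^ 2 * bphi2 m j x + x * bphi1 m j x - (1 + lam) * bphi m j x
      = x ^ m * (((m ^ 2 + m) / 2 - (1 + lam)) * (t ^ j * t)
          - ((j : ℝ) + 1) * μ * t ^ j + (((j : ℝ) + 1) / 2) * ((j : ℝ) * t ^ (j - 1))) := by
    simp only [bphi, bphi1, bphi2, ← htdef, pow_succ]
    rw [rpow_peel hx.ne' m, rpow_peel hx.ne' (m - 1), hμ]
    ring
  rw [hEeq, hind]
  have hz : ((2 + 2 * lam) / 2 - (1 + lam)) = 0 := by ring
  rw [hz]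
  have hP : (0 : ℝ) < x ^ m := Real.rpow_pos_of_pos hx m
  have hu' : (((j : ℝ) + 1) / 2) * ((j : ℝ) * t ^ (j - 1))
      ≤ (((j : ℝ) + 1) / 2) * (μ * t ^ j) :=
    mul_le_mul_of_nonneg_left hu (by positivity)
  have hjprod : (0 : ℝ) ≤ (j : ℝ) * (μ * (x ^ m * t ^ j)) := by positivity
  linarith [mul_le_mul_of_nonneg_left hu' hP.le, hjprod,
    mul_nonneg hμpos.le (mul_nonneg hP.le (pow_nonneg htpos.le j))]

lemma second_nonneg {f f' f'' : ℝ → ℝ} {c : ℝ} {U : Set ℝ} (hU : U ∈ 𝓝 c)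
    (hd1 : ∀ x ∈ U, HasDerivAt f (f' x) x)
    (hd2 : ∀ x ∈ U, HasDerivAt f' (f'' x) x)
    (hcont : ContinuousAt f'' c)
    (hmin : IsLocalMin f c) : f' c = 0 ∧ 0 ≤ f'' c := by
  have hcU : c ∈ U := mem_of_mem_nhds hU
  have h0 : f' c = 0 := by
    have := hmin.deriv_eq_zero
    rwa [(hd1 c hcU).deriv] at this
  refine ⟨h0, ?_⟩
  by_contra h
  push_neg at h
  have hlt : {x | f'' x < 0} ∈ 𝓝 c := hcont (Iio_mem_nhds h)
  obtain ⟨r, hr, hball⟩ := Metric.mem_nhds_iff.1 (inter_mem hU hlt)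
  set b := c + r / 2 with hb
  have hcb : c < b := by simp only [hb]; linarith
  have hsub : Icc c b ⊆ Metric.ball c r := by
    intro y hy
    obtain ⟨h1, h2⟩ := hy
    have : |y - c| < r := by
      rw [abs_sub_lt_iff]
      constructor <;> simp only [hb] at h2 ⊢ <;> linarith
    simpa [Metric.mem_ball, Real.dist_eq] using this
  have hIccU : ∀ y ∈ Icc c b, y ∈ U := fun y hy => (hball (hsub hy)).1
  have hIccneg : ∀ y ∈ Icc c b, f'' y < 0 := fun y hy => (hball (hsub hy)).2
  have hanti' : StrictAntiOn f' (Icc c b) := by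
    apply strictAntiOn_of_deriv_neg (convex_Icc c b) (fun y hy =>
      ((hd2 y (hIccU y hy)).continuousAt).continuousWithinAt)
    intro y hy
    rw [interior_Icc] at hy
    rw [(hd2 y (hIccU y ⟨hy.1.le, hy.2.le⟩)).deriv]
    exact hIccneg y ⟨hy.1.le, hy.2.le⟩
  have hanti : StrictAntiOn f (Icc c b) := by
    apply strictAntiOn_of_deriv_neg (convex_Icc c b) (fun y hy =>
      ((hd1 y (hIccU y hy)).continuousAt).continuousWithinAt)
    intro y hy
    rw [interior_Icc] at hy
    rw [(hd1 y (hIccU y ⟨hy.1.le, hy.2.le⟩)).deriv]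
    have := hanti' (left_mem_Icc.2 hcb.le) ⟨hy.1.le, hy.2.le⟩ hy.1
    rw [h0] at this
    exact this
  have hev : ∀ᶠ y in 𝓝[>] c, f c ≤ f y ∧ y ∈ Ioc c b := by
    filter_upwards [hmin.filter_mono nhdsWithin_le_nhds,
      Ioc_mem_nhdsGT_of_mem ⟨le_refl c, hcb⟩] with y h1 h2
    exact ⟨h1, h2⟩
  obtain ⟨y, hy1, hy2⟩ := hev.exists
  have := hanti (left_mem_Icc.2 hcb.le) ⟨hy2.1.le, hy2.2⟩ hy2.1
  linarith

lemma tendsto_bpsi (q : ℝ) (hq : q < 0) :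
    Tendsto (bpsi q) (𝓝[>] (0:ℝ)) atTop := by
  have h1 : Tendsto (fun x : ℝ => (x⁻¹) ^ (-q)) (𝓝[>] (0:ℝ)) atTop :=
    (tendsto_rpow_atTop (by linarith : (0:ℝ) < -q)).comp tendsto_inv_nhdsGT_zero
  refine h1.congr' ?_
  filter_upwards [self_mem_nhdsWithin] with x (hx : x ∈ Ioi (0:ℝ))
  have hx0 : (0:ℝ) < x := hx
  rw [Real.inv_rpow hx0.le, ← Real.rpow_neg hx0.le, neg_neg]
  rfl

/-- One-sided version: an upper bound on `v` alone suffices to bound `v` from above. -/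
lemma one_sided (lam : ℝ) (hlam : 0 ≤ lam)
    (x₀ : ℝ) (hx₀ : x₀ ∈ Set.Ioo (0:ℝ) 1)
    (K : ℝ) (hK : 0 < K) (j : ℕ)
    (F v : ℝ → ℝ)
    (hFbd : ∀ x ∈ Set.Ioc (0:ℝ) x₀,
      |F x| ≤ K * x ^ mUp lam * (1 - Real.log x) ^ j)
    (hv1 : ∀ x ∈ Set.Ioc (0:ℝ) x₀, DifferentiableAt ℝ v x)
    (hv2 : ∀ x ∈ Set.Ioc (0:ℝ) x₀, DifferentiableAt ℝ (deriv v) x)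
    (hv3 : ContinuousOn (deriv (deriv v)) (Set.Ioc 0 x₀))
    (M : ℝ) (hM : ∀ x ∈ Set.Ioc (0:ℝ) x₀, v x ≤ M)
    (hode : ∀ x ∈ Set.Ioc (0:ℝ) x₀,
      (1/2) * x^2 * deriv (deriv v) x + x * deriv v x - (1 + lam) * v x = F x) :
    ∃ C' : ℝ, 0 ≤ C' ∧ ∀ x ∈ Set.Ioc (0:ℝ) x₀,
      v x ≤ C' * x ^ mUp lam * (1 - Real.log x) ^ (j + 1) := by
  obtain ⟨hx₀0, hx₀1⟩ := hx₀
  set m := mUp lam with hmdef0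
  set q := mDown lam with hqdef0
  have hs2 : Real.sqrt (9 + 8 * lam) ^ 2 = 9 + 8 * lam := Real.sq_sqrt (by linarith)
  have hs3 : (3:ℝ) ≤ Real.sqrt (9 + 8 * lam) := by
    rw [show (3:ℝ) = Real.sqrt 9 by
      rw [show (9:ℝ) = 3 ^ 2 by norm_num, Real.sqrt_sq (by norm_num : (0:ℝ) ≤ 3)]]
    exact Real.sqrt_le_sqrt (by linarith)
  have hmdef : m = (-1 + Real.sqrt (9 + 8 * lam)) / 2 := rfl
  have hqdef : q = (-1 - Real.sqrt (9 + 8 * lam)) / 2 := rfl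
  have hm1 : 1 ≤ m := by rw [hmdef]; linarith
  have hsm : Real.sqrt (9 + 8 * lam) = 2 * m + 1 := by rw [hmdef]; ring
  have hind : m ^ 2 + m = 2 + 2 * lam := by
    have hs2' : (2 * m + 1) ^ 2 = 9 + 8 * lam := by rw [← hsm]; exact hs2
    nlinarith [hs2']
  have hq2 : q ≤ -2 := by rw [hqdef]; linarith
  have hsq : Real.sqrt (9 + 8 * lam) = -(2 * q + 1) := by rw [hqdef]; ring
  have hindq : q ^ 2 + q = 2 + 2 * lam := by
    have hs2' : (2 * q + 1) ^ 2 = 9 + 8 * lam := by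
      have := hs2; rw [hsq] at this; nlinarith [this]
    nlinarith [hs2']
  set μ := m + 1/2 with hμdef
  have hμpos : (0:ℝ) < μ := by rw [hμdef]; linarith
  set T := max (1 - Real.log x₀) ((j : ℝ) / μ) with hTdef
  have hlogx₀ : Real.log x₀ < 0 := Real.log_neg hx₀0 hx₀1
  have hT1 : 1 < T := lt_of_lt_of_le (by linarith) (le_max_left _ _)
  set x₁ := Real.exp (1 - T) with hx₁def
  have hx₁0 : 0 < x₁ := Real.exp_pos _
  have hlx₁ : Real.log x₁ = 1 - T := Real.log_exp _
  have hx₁x₀ : x₁ ≤ x₀ := by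
    rw [hx₁def, ← Real.exp_log hx₀0]
    exact Real.exp_le_exp.2 (by linarith [le_max_left (1 - Real.log x₀) ((j : ℝ) / μ)])
  have hTj : (j : ℝ) ≤ μ * T := by
    have h := le_max_right (1 - Real.log x₀) ((j : ℝ) / μ)
    calc (j : ℝ) = μ * ((j : ℝ) / μ) := by field_simp
      _ ≤ μ * T := mul_le_mul_of_nonneg_left h hμpos.le
  have ht_low : ∀ x ∈ Set.Ioc (0:ℝ) x₁, T ≤ 1 - Real.log x := by
    intro x hx
    have : Real.log x ≤ Real.log x₁ := Real.log_le_log hx.1 hx.2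
    rw [hlx₁] at this; linarith
  -- barrier constants
  have htx₁ : 1 - Real.log x₁ = T := by rw [hlx₁]; ring
  clear_value m q μ T x₁
  have hφx₁pos : 0 < bphi m j x₁ := by
    have : (0:ℝ) < 1 - Real.log x₁ := by rw [htx₁]; linarith
    exact mul_pos (Real.rpow_pos_of_pos hx₁0 m) (pow_pos this _)
  set Mp := max M 0 with hMpdef
  have hMp0 : 0 ≤ Mp := le_max_right _ _
  have hMMp : M ≤ Mp := le_max_left _ _
  clear_value Mp
  set A := 2 * K / μ + Mp / bphi m j x₁ with hA
  have hA0 : 0 ≤ A :=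
    add_nonneg (div_nonneg (by linarith) hμpos.le) (div_nonneg hMp0 hφx₁pos.le)
  have hAK : K ≤ A * (μ / 2) := by
    have h1 : 2 * K / μ * (μ / 2) = K := by field_simp
    have h2 : 0 ≤ Mp / bphi m j x₁ * (μ / 2) :=
      mul_nonneg (div_nonneg hMp0 hφx₁pos.le) (by linarith)
    calc K = 2 * K / μ * (μ / 2) := h1.symm
      _ ≤ A * (μ / 2) := by rw [hA]; ring_nf; ring_nf at h2; linarith
  have hAM : M ≤ A * bphi m j x₁ := by
    have h1 : Mp / bphi m j x₁ * bphi m j x₁ = Mp := div_mul_cancel₀ _ hφx₁pos.ne'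
    have h2 : 0 ≤ 2 * K / μ * bphi m j x₁ :=
      mul_nonneg (div_nonneg (by linarith) hμpos.le) hφx₁pos.le
    calc M ≤ Mp := hMMp
      _ = Mp / bphi m j x₁ * bphi m j x₁ := h1.symm
      _ ≤ A * bphi m j x₁ := by rw [hA]; ring_nf; ring_nf at h2; linarith
  clear_value A
  -- main claim on (0, x₁]
  have key : ∀ x ∈ Set.Ioc (0:ℝ) x₁, v x ≤ A * bphi m j x := by
    have hεclaim : ∀ ε : ℝ, 0 < ε → ∀ x ∈ Set.Ioc (0:ℝ) x₁,
        v x ≤ A * bphi m j x + ε * bpsi q x := by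
      intro ε hε
      set w := fun x => A * bphi m j x + ε * bpsi q x - v x with hw
      clear_value w
      have hq0 : q < 0 := by linarith
      have hev : ∀ᶠ x in 𝓝[>] (0:ℝ), M ≤ ε * bpsi q x := by
        filter_upwards [(tendsto_bpsi q hq0).eventually_ge_atTop (M / ε)] with x hx
        rw [div_le_iff₀ hε] at hx
        calc M ≤ bpsi q x * ε := hx
          _ = ε * bpsi q x := mul_comm _ _
      obtain ⟨δ, hδmem, hδ⟩ := mem_nhdsGT_iff_exists_Ioc_subset.1 hev
      have hδ0 : (0:ℝ) < δ := hδmem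
      set δ' := min δ x₁ with hδ'def
      have hδ'0 : 0 < δ' := lt_min hδ0 hx₁0
      have hδ'x₁ : δ' ≤ x₁ := min_le_right _ _
      have hδ'δ : δ' ≤ δ := min_le_left _ _
      clear_value δ'
      -- w is nonnegative near zero
      have hw0 : ∀ x ∈ Set.Ioc (0:ℝ) δ', 0 ≤ w x := by
        intro x hx
        have h1 : M ≤ ε * bpsi q x := hδ ⟨hx.1, le_trans hx.2 hδ'δ⟩
        have hx0 : 0 < x := hx.1
        have hvx : v x ≤ M := hM x ⟨hx0, le_trans (le_trans hx.2 hδ'x₁) hx₁x₀⟩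
        have hφ0 : 0 ≤ A * bphi m j x := by
          apply mul_nonneg hA0
          apply mul_nonneg (Real.rpow_nonneg hx0.le m)
          have hlogx : Real.log x < 0 :=
            Real.log_neg hx0 (lt_of_le_of_lt (le_trans hx.2 (le_trans hδ'x₁ hx₁x₀)) hx₀1)
          exact pow_nonneg (by linarith) _
        simp only [hw]
        linarith
      -- w is nonnegative at x₁
      have hwx₁ : 0 ≤ w x₁ := by
        have hv := hM x₁ ⟨hx₁0, hx₁x₀⟩
        have hψ0 : 0 ≤ ε * bpsi q x₁ :=
          mul_nonneg hε.le (Real.rpow_nonneg hx₁0.le q)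
        simp only [hw]
        linarith [hAM]
      -- minimum on [δ', x₁]
      have hwcont : ∀ y ∈ Icc δ' x₁, ContinuousAt w y := by
        intro y hy
        have hy0 : 0 < y := lt_of_lt_of_le hδ'0 hy.1
        have hyI : y ∈ Set.Ioc (0:ℝ) x₀ := ⟨hy0, le_trans hy.2 hx₁x₀⟩
        rw [hw]
        exact ((continuousAt_const.mul (bphi_contAt m j hy0)).add
          (continuousAt_const.mul (bpsi_contAt q hy0))).sub (hv1 y hyI).continuousAt
      obtain ⟨c, hcmem, hcmin⟩ := isCompact_Icc.exists_isMinOn (nonempty_Icc.2 hδ'x₁)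
        (fun y hy => (hwcont y hy).continuousWithinAt)
      have hwc : 0 ≤ w c := by
        by_contra hneg
        push_neg at hneg
        have hcδ' : δ' < c := by
          rcases lt_or_eq_of_le hcmem.1 with h | h
          · exact h
          · exfalso; rw [← h] at hneg; linarith [hw0 δ' ⟨hδ'0, le_refl δ'⟩]
        have hcx₁ : c < x₁ := by
          rcases lt_or_eq_of_le hcmem.2 with h | h
          · exact h
          · exfalso; rw [h] at hneg; linarith
        have hc0 : 0 < c := lt_trans hδ'0 hcδ'
        have hcx₀ : c < x₀ := lt_of_lt_of_le hcx₁ hx₁x₀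
        have hUc : Ioo (0:ℝ) x₀ ∈ 𝓝 c := isOpen_Ioo.mem_nhds ⟨hc0, hcx₀⟩
        have hloc : IsLocalMin w c := hcmin.isLocalMin (Icc_mem_nhds hcδ' hcx₁)
        set w1 := fun x => A * bphi1 m j x + ε * bpsi1 q x - deriv v x with hw1
        set w2 := fun x => A * bphi2 m j x + ε * bpsi2 q x - deriv (deriv v) x with hw2
        clear_value w1 w2
        have hd1 : ∀ x ∈ Ioo (0:ℝ) x₀, HasDerivAt w (w1 x) x := by
          intro x hx
          simp only [hw, hw1]
          exact (((bphi_hasDeriv m j hx.1).const_mul A).add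
            ((bpsi_hasDeriv q hx.1).const_mul ε)).sub
            ((hv1 x ⟨hx.1, hx.2.le⟩).hasDerivAt)
        have hd2 : ∀ x ∈ Ioo (0:ℝ) x₀, HasDerivAt w1 (w2 x) x := by
          intro x hx
          simp only [hw1, hw2]
          exact (((bphi1_hasDeriv m j hx.1).const_mul A).add
            ((bpsi1_hasDeriv q hx.1).const_mul ε)).sub
            ((hv2 x ⟨hx.1, hx.2.le⟩).hasDerivAt)
        have hcont2 : ContinuousAt w2 c := by
          have hvv : ContinuousAt (deriv (deriv v)) c :=
            hv3.continuousAt (mem_of_superset hUc Ioo_subset_Ioc_self)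
          simp only [hw2]
          exact ((continuousAt_const.mul (bphi2_contAt m j hc0)).add
            (continuousAt_const.mul (bpsi2_contAt q hc0))).sub hvv
        obtain ⟨hw1c, hw2c⟩ := second_nonneg hUc hd1 hd2 hcont2 hloc
        -- the ODE contradiction
        have hcI : c ∈ Set.Ioc (0:ℝ) x₀ := ⟨hc0, hcx₀.le⟩
        have hFc := hFbd c hcI
        have hodec := hode c hcI
        have ht1c : 1 ≤ 1 - Real.log c := by linarith [ht_low c ⟨hc0, hcx₁.le⟩, hT1]
        have htjc : (j : ℝ) ≤ μ * (1 - Real.log c) := by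
          have h := ht_low c ⟨hc0, hcx₁.le⟩
          calc (j : ℝ) ≤ μ * T := hTj
            _ ≤ μ * (1 - Real.log c) := mul_le_mul_of_nonneg_left h hμpos.le
        have hLφc := Lbphi_le lam m μ hind hμdef hμpos j hc0 ht1c htjc
        have hLψc := Lbpsi lam q hindq hc0
        have hcomb : (1/2) * c ^ 2 * w2 c + c * w1 c - (1 + lam) * w c
            = A * ((1/2) * c ^ 2 * bphi2 m j c + c * bphi1 m j c - (1 + lam) * bphi m j c)
              + ε * ((1/2) * c ^ 2 * bpsi2 q c + c * bpsi1 q c - (1 + lam) * bpsi q c)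
              - F c := by
          simp only [hw, hw1, hw2]
          rw [← hodec]
          ring
        have hX : (0:ℝ) < c ^ m * (1 - Real.log c) ^ j := by
          have : (0:ℝ) < 1 - Real.log c := by linarith
          exact mul_pos (Real.rpow_pos_of_pos hc0 m) (pow_pos this _)
        have h1' : A * ((1/2) * c ^ 2 * bphi2 m j c + c * bphi1 m j c - (1 + lam) * bphi m j c)
            ≤ -(A * (μ/2) * (c ^ m * (1 - Real.log c) ^ j)) := by
          calc A * ((1/2) * c ^ 2 * bphi2 m j c + c * bphi1 m j c - (1 + lam) * bphi m j c)
              ≤ A * (-(μ/2) * (c ^ m * (1 - Real.log c) ^ j)) :=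
                mul_le_mul_of_nonneg_left hLφc hA0
            _ = -(A * (μ/2) * (c ^ m * (1 - Real.log c) ^ j)) := by ring
        have h2' : -F c ≤ K * c ^ m * (1 - Real.log c) ^ j := by
          have := (abs_le.1 hFc).1
          linarith
        have h3' : K * (c ^ m * (1 - Real.log c) ^ j)
            ≤ A * (μ/2) * (c ^ m * (1 - Real.log c) ^ j) :=
          mul_le_mul_of_nonneg_right hAK hX.le
        have h4' : 0 ≤ (1/2) * c ^ 2 * w2 c :=
          mul_nonneg (by positivity) hw2c
        have h5' : (0:ℝ) < (1 + lam) * (-(w c)) :=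
          mul_pos (by linarith) (neg_pos.2 hneg)
        have h6' : ε * ((1/2) * c ^ 2 * bpsi2 q c + c * bpsi1 q c - (1 + lam) * bpsi q c) = 0 := by
          rw [hLψc, mul_zero]
        rw [hw1c] at hcomb
        linarith [hcomb, h1', h2', h3', h4', h5', h6']
      -- conclude on (0, x₁]
      intro x hx
      rcases le_or_gt x δ' with h | h
      · have := hw0 x ⟨hx.1, h⟩
        simp only [hw] at this
        linarith
      · have h2 := hcmin (⟨h.le, hx.2⟩ : x ∈ Icc δ' x₁)
        have : w c ≤ w x := h2
        simp only [hw] at this hwc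
        linarith
    intro x hx
    have hψpos : 0 < bpsi q x := Real.rpow_pos_of_pos hx.1 q
    by_contra hcon
    push_neg at hcon
    have h := hεclaim ((v x - A * bphi m j x) / (2 * bpsi q x))
      (div_pos (by linarith) (by linarith)) x hx
    have hre : (v x - A * bphi m j x) / (2 * bpsi q x) * bpsi q x
        = (v x - A * bphi m j x) / 2 := by
      field_simp
    rw [hre] at h
    linarith
  -- extend to (0, x₀]
  have hBnn : 0 ≤ Mp / x₁ ^ m := div_nonneg hMp0 (Real.rpow_nonneg hx₁0.le m)
  refine ⟨A + Mp / x₁ ^ m, add_nonneg hA0 hBnn, ?_⟩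
  intro x hx
  have hx0 : 0 < x := hx.1
  have hlogx : Real.log x < 0 := Real.log_neg hx0 (lt_of_le_of_lt hx.2 hx₀1)
  have htpos : (0:ℝ) < 1 - Real.log x := by linarith
  have hφnn : 0 ≤ x ^ m * (1 - Real.log x) ^ (j + 1) := by positivity
  have hB0 : 0 ≤ Mp / x₁ ^ m := div_nonneg hMp0 (Real.rpow_nonneg hx₁0.le m)
  rcases le_or_gt x x₁ with h | h
  · have hk := key x ⟨hx0, h⟩
    have : A * bphi m j x ≤ (A + Mp / x₁ ^ m) * x ^ m * (1 - Real.log x) ^ (j + 1) := by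
      simp only [bphi]
      linarith [mul_nonneg hB0 hφnn]
    calc v x ≤ A * bphi m j x := hk
      _ ≤ _ := this
  · have hvx := hM x hx
    have h1 : x₁ ^ m ≤ x ^ m := Real.rpow_le_rpow hx₁0.le h.le (by linarith)
    have h2 : (1:ℝ) ≤ (1 - Real.log x) ^ (j + 1) := one_le_pow₀ (by linarith)
    have hx₁m : (0:ℝ) < x₁ ^ m := Real.rpow_pos_of_pos hx₁0 m
    have hMpb : Mp ≤ Mp / x₁ ^ m * x ^ m := by
      calc Mp = Mp / x₁ ^ m * x₁ ^ m := (div_mul_cancel₀ _ hx₁m.ne').symm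
        _ ≤ Mp / x₁ ^ m * x ^ m := mul_le_mul_of_nonneg_left h1 hB0
    have hxm0 : (0:ℝ) ≤ x ^ m := Real.rpow_nonneg hx0.le m
    calc v x ≤ M := hvx
      _ ≤ Mp := hMMp
      _ ≤ Mp / x₁ ^ m * x ^ m := hMpb
      _ ≤ Mp / x₁ ^ m * x ^ m * (1 - Real.log x) ^ (j + 1) := by
          linarith [mul_nonneg (mul_nonneg hB0 hxm0) (sub_nonneg.2 h2)]
      _ ≤ (A + Mp / x₁ ^ m) * x ^ m * (1 - Real.log x) ^ (j + 1) := by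
          linarith [mul_nonneg (mul_nonneg hA0 hxm0) (le_of_lt (pow_pos htpos (j+1)))]

/-- **Decay-transfer estimate (resonant case).** Let `λ ≥ 0`, `x₀ ∈ (0,1)`, `K > 0`,
`j ∈ ℕ`. If `v` is a bounded `C²` solution of `(1/2)x²v'' + x v' - (1+λ)v = F` on
`(0, x₀]` with `F` continuous and `|F(x)| ≤ K x^{m̄(λ)} (1 - log x)^j`, then
`|v(x)| ≤ C' x^{m̄(λ)} (1 - log x)^{j+1}` on `(0, x₀]` for some constant `C'`. -/
theorem euler_decay_transfer_resonant (lam : ℝ) (hlam : 0 ≤ lam)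
    (x₀ : ℝ) (hx₀ : x₀ ∈ Set.Ioo (0:ℝ) 1)
    (K : ℝ) (hK : 0 < K) (j : ℕ)
    (F v : ℝ → ℝ)
    (hF : ContinuousOn F (Set.Ioc 0 x₀))
    (hFbd : ∀ x ∈ Set.Ioc (0:ℝ) x₀,
      |F x| ≤ K * x ^ mUp lam * (1 - Real.log x) ^ j)
    (hv1 : ∀ x ∈ Set.Ioc (0:ℝ) x₀, DifferentiableAt ℝ v x)
    (hv2 : ∀ x ∈ Set.Ioc (0:ℝ) x₀, DifferentiableAt ℝ (deriv v) x)
    (hv3 : ContinuousOn (deriv (deriv v)) (Set.Ioc 0 x₀))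
    (hvbdd : ∃ M : ℝ, ∀ x ∈ Set.Ioc (0:ℝ) x₀, |v x| ≤ M)
    (hode : ∀ x ∈ Set.Ioc (0:ℝ) x₀,
      (1/2) * x^2 * deriv (deriv v) x + x * deriv v x - (1 + lam) * v x = F x) :
    ∃ C' : ℝ, ∀ x ∈ Set.Ioc (0:ℝ) x₀,
      |v x| ≤ C' * x ^ mUp lam * (1 - Real.log x) ^ (j + 1) := by
  obtain ⟨M, hMb⟩ := hvbdd
  have hM1 : ∀ x ∈ Set.Ioc (0:ℝ) x₀, v x ≤ M := fun x hx => (abs_le.1 (hMb x hx)).2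
  obtain ⟨C₁, hC₁0, hC₁⟩ := one_sided lam hlam x₀ hx₀ K hK j F v hFbd hv1 hv2 hv3 M hM1 hode
  -- now for -v
  set vn : ℝ → ℝ := fun x => -v x with hvn
  set Fn : ℝ → ℝ := fun x => -F x with hFn
  have hdneg : deriv vn = fun y => -deriv v y := by
    rw [hvn]; exact deriv.neg'
  have hd2neg : deriv (deriv vn) = fun y => -deriv (deriv v) y := by
    rw [hdneg]; exact deriv.neg'
  have hFbdn : ∀ x ∈ Set.Ioc (0:ℝ) x₀,
      |Fn x| ≤ K * x ^ mUp lam * (1 - Real.log x) ^ j := by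
    intro x hx
    simp only [hFn, abs_neg]
    exact hFbd x hx
  have hv1n : ∀ x ∈ Set.Ioc (0:ℝ) x₀, DifferentiableAt ℝ vn x := by
    intro x hx
    simp only [hvn]
    exact (hv1 x hx).neg
  have hv2n : ∀ x ∈ Set.Ioc (0:ℝ) x₀, DifferentiableAt ℝ (deriv vn) x := by
    intro x hx
    rw [hdneg]
    exact (hv2 x hx).neg
  have hv3n : ContinuousOn (deriv (deriv vn)) (Set.Ioc 0 x₀) := by
    rw [hd2neg]
    exact hv3.neg
  have hM1n : ∀ x ∈ Set.Ioc (0:ℝ) x₀, vn x ≤ M := by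
    intro x hx
    simp only [hvn]
    linarith [(abs_le.1 (hMb x hx)).1]
  have hoden : ∀ x ∈ Set.Ioc (0:ℝ) x₀,
      (1/2) * x^2 * deriv (deriv vn) x + x * deriv vn x - (1 + lam) * vn x = Fn x := by
    intro x hx
    rw [hd2neg, hdneg]
    show (1/2) * x^2 * (-deriv (deriv v) x) + x * (-deriv v x) - (1 + lam) * (-v x) = -F x
    linarith [hode x hx]
  obtain ⟨C₂, hC₂0, hC₂⟩ := one_sided lam hlam x₀ hx₀ K hK j Fn vn hFbdn hv1n hv2n hv3n M hM1n hoden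
  refine ⟨max C₁ C₂, fun x hx => ?_⟩
  have hx0 : 0 < x := hx.1
  have hlogx : Real.log x < 0 := Real.log_neg hx0 (lt_of_le_of_lt hx.2 hx₀.2)
  have hxm0 : (0:ℝ) ≤ x ^ mUp lam := Real.rpow_nonneg hx0.le _
  have ht0 : (0:ℝ) ≤ (1 - Real.log x) ^ (j + 1) := pow_nonneg (by linarith) _
  have e1 : C₁ * x ^ mUp lam * (1 - Real.log x) ^ (j + 1)
      ≤ max C₁ C₂ * x ^ mUp lam * (1 - Real.log x) ^ (j + 1) :=
    mul_le_mul_of_nonneg_right (mul_le_mul_of_nonneg_right (le_max_left _ _) hxm0) ht0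
  have e2 : C₂ * x ^ mUp lam * (1 - Real.log x) ^ (j + 1)
      ≤ max C₁ C₂ * x ^ mUp lam * (1 - Real.log x) ^ (j + 1) :=
    mul_le_mul_of_nonneg_right (mul_le_mul_of_nonneg_right (le_max_right _ _) hxm0) ht0
  have b1 := hC₁ x hx
  have b2 := hC₂ x hx
  simp only [hvn] at b2
  rw [abs_le]
  constructor <;> linarith
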